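/- (Proposition 1: existence and uniqueness of the maximal uncertainty-set radius.) Let E be a real normed vector space, f : E → ℝ continuous, M ∈ E, λ > 0, and suppose f(m) ≤ f(M) − (λ/2)·‖m − M‖² for every m ∈ E (as holds when M is the maximizer of a λ-strongly concave f). Let θ' ∈ E with f(θ') ≤ f(M). Then the set S := { ε ∈ ℝ : ε ≥ 0 and for every m ∈ E with ‖m − M‖² ≤ ε, f(θ') ≤ f(m) } is nonempty, bounded above, and possesses a greatest element. -/

import Mathlib

/-- Existence and uniqueness of the maximal uncertainty-set radius
(Proposition 1): if `f` is continuous, `f m ≤ f M - (λ/2)‖m - M‖²` for all `m`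
(as for the maximizer of a λ-strongly concave function), and `f θ' ≤ f M`, then
the feasible set of squared radii is nonempty, bounded above, and has a
greatest element. -/
theorem uncertainty_radius_exists_greatest
    {E : Type*} [NormedAddCommGroup E] [NormedSpace ℝ E] [Nontrivial E]
    (f : E → ℝ) (hf : Continuous f) (M : E) (lam : ℝ) (hlam : 0 < lam)
    (hquad : ∀ m : E, f m ≤ f M - lam / 2 * ‖m - M‖ ^ 2)
    (θ' : E) (hθ' : f θ' ≤ f M)
    (S : Set ℝ)
    (hS : S = {ε : ℝ | 0 ≤ ε ∧ ∀ m : E, ‖m - M‖ ^ 2 ≤ ε → f θ' ≤ f m}) :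
    S.Nonempty ∧ BddAbove S ∧ ∃ ε : ℝ, IsGreatest S ε := by
  subst hS
  obtain ⟨v, hv⟩ := exists_ne (0 : E)
  have hv' : (0:ℝ) < ‖v‖ := norm_pos_iff.mpr hv
  have h0 : (0:ℝ) ∈ {ε : ℝ | 0 ≤ ε ∧ ∀ m : E, ‖m - M‖ ^ 2 ≤ ε → f θ' ≤ f m} := by
    refine ⟨le_refl 0, fun m hm => ?_⟩
    have h1 : ‖m - M‖ = 0 := by nlinarith [norm_nonneg (m - M)]
    have h2 : m = M := by rwa [norm_eq_zero, sub_eq_zero] at h1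
    simpa [h2] using hθ'
  have hne : Set.Nonempty {ε : ℝ | 0 ≤ ε ∧ ∀ m : E, ‖m - M‖ ^ 2 ≤ ε → f θ' ≤ f m} := ⟨0, h0⟩
  have hbdd : BddAbove {ε : ℝ | 0 ≤ ε ∧ ∀ m : E, ‖m - M‖ ^ 2 ≤ ε → f θ' ≤ f m} := by
    refine ⟨2 / lam * (f M - f θ'), fun ε hε => ?_⟩
    obtain ⟨hε0, hεall⟩ := hε
    set m : E := M + (Real.sqrt ε / ‖v‖) • v with hm
    have hnorm : ‖m - M‖ = Real.sqrt ε := by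
      have : m - M = (Real.sqrt ε / ‖v‖) • v := by simp [hm]
      rw [this, norm_smul, Real.norm_eq_abs,
        abs_of_nonneg (div_nonneg (Real.sqrt_nonneg ε) hv'.le)]
      field_simp
    have hsq : ‖m - M‖ ^ 2 = ε := by rw [hnorm, Real.sq_sqrt hε0]
    have h1 : f θ' ≤ f m := hεall m (le_of_eq hsq)
    have h2 : f m ≤ f M - lam / 2 * ε := by
      have := hquad m; rwa [hsq] at this
    have hlam' : (0:ℝ) < 2 / lam := by positivity
    rw [div_mul_eq_mul_div, le_div_iff₀ hlam]
    nlinarith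
  refine ⟨hne, hbdd, sSup _, ?_, fun x hx => le_csSup hbdd hx⟩
  set s := sSup {ε : ℝ | 0 ≤ ε ∧ ∀ m : E, ‖m - M‖ ^ 2 ≤ ε → f θ' ≤ f m} with hs
  have hs0 : 0 ≤ s := le_csSup hbdd h0
  refine ⟨hs0, fun m hm => ?_⟩
  rcases eq_or_lt_of_le hs0 with h | hspos
  · have h1 : ‖m - M‖ = 0 := by nlinarith [norm_nonneg (m - M)]
    have h2 : m = M := by rwa [norm_eq_zero, sub_eq_zero] at h1
    simpa [h2] using hθ'
  · have key : ∀ t : ℝ, 0 ≤ t → t < 1 → f θ' ≤ f (M + t • (m - M)) := by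
      intro t ht0 ht1
      have hlt : ‖(M + t • (m - M)) - M‖ ^ 2 < s := by
        have he : (M + t • (m - M)) - M = t • (m - M) := by abel
        rw [he, norm_smul, Real.norm_eq_abs, abs_of_nonneg ht0, mul_pow]
        have ht2 : t ^ 2 < 1 := by nlinarith
        nlinarith [mul_le_mul_of_nonneg_left hm (sq_nonneg t), sq_nonneg t]
      obtain ⟨ε, hεS, hεgt⟩ := exists_lt_of_lt_csSup hne hlt
      exact hεS.2 _ hεgt.le
    set g : ℝ → ℝ := fun t => f (M + t • (m - M)) with hg
    have hgc : Continuous g :=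
      hf.comp (continuous_const.add (continuous_id.smul continuous_const))
    have hu : Filter.Tendsto (fun n : ℕ => 1 - 1 / (n + 1 : ℝ)) Filter.atTop (nhds 1) := by
      have := tendsto_one_div_add_atTop_nhds_zero_nat (𝕜 := ℝ)
      have h := (tendsto_const_nhds (x := (1:ℝ)) (f := Filter.atTop (α := ℕ))).sub this
      simpa using h
    have hcomp : Filter.Tendsto (fun n : ℕ => g (1 - 1 / (n + 1 : ℝ)))
        Filter.atTop (nhds (g 1)) := (hgc.tendsto 1).comp hu
    have hg1 : g 1 = f m := by simp [hg]
    rw [← hg1]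
    refine ge_of_tendsto' hcomp fun n => ?_
    have hn : (0:ℝ) < 1 / (n + 1 : ℝ) := by positivity
    have hn1 : 1 / (n + 1 : ℝ) ≤ 1 := by
      rw [div_le_one (by positivity)]; linarith [Nat.cast_nonneg (α := ℝ) n]
    exact key _ (by linarith) (by linarith)
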